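/- Let G be an undirected graph with terminal set T ⊆ V(G), and let s, t be two new nodes. Let H be the undirected graph with vertex set V(G) ∪ {s, t} ∪ {x_v, x'_v : v ∈ T} and edge set E(G) ∪ {{x_v, v}, {x'_v, v}, {x_v, x'_v}, {s, x_v}, {t, x_v} : v ∈ T}. Then a subset F ⊆ E(G) intersects every path in G between two distinct terminals of T (i.e., F is a multiway cut of T in G) if and only if H − F contains no odd-length s–t path. -/

import Mathlib

/-- The graph `H` of the reduction from MultiwayCut to `{s,t}`-OddPathEdgeBlocker.
Vertices: `Sum.inl v` are the vertices of `G`; `s = Sum.inr (Sum.inl false)` and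
`t = Sum.inr (Sum.inl true)` are the two new terminals; for `v ∈ T`,
`x_v = Sum.inr (Sum.inr (v, false))` and `x'_v = Sum.inr (Sum.inr (v, true))`.
Edges: the edges of `G`, together with `{x_v, v}`, `{x'_v, v}`, `{x_v, x'_v}`,
`{s, x_v}` and `{t, x_v}` for every terminal `v ∈ T`. -/
def mwcGraph {V : Type*} (G : SimpleGraph V) (T : Set V) :
    SimpleGraph (V ⊕ Bool ⊕ V × Bool) :=
  SimpleGraph.fromRel (fun a b =>
    match a, b with
    | Sum.inl u, Sum.inl v => G.Adj u v
    | Sum.inr (Sum.inr (v, _)), Sum.inl u => v ∈ T ∧ u = v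
    | Sum.inr (Sum.inr (v, false)), Sum.inr (Sum.inr (w, true)) => v ∈ T ∧ v = w
    | Sum.inr (Sum.inl _), Sum.inr (Sum.inr (v, false)) => v ∈ T
    | _, _ => False)

namespace MwcAux

open SimpleGraph Walk

variable {V : Type*} {G : SimpleGraph V} {T : Set V}

lemma adj_GG {u v : V} (h : G.Adj u v) :
    (mwcGraph G T).Adj (Sum.inl u) (Sum.inl v) := by
  rw [mwcGraph, SimpleGraph.fromRel_adj]
  exact ⟨by simp [h.ne], Or.inl h⟩

lemma adj_sx {v : V} (hv : v ∈ T) (β : Bool) :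
    (mwcGraph G T).Adj (Sum.inr (Sum.inl β)) (Sum.inr (Sum.inr (v, false))) := by
  rw [mwcGraph, SimpleGraph.fromRel_adj]
  exact ⟨by simp, Or.inl hv⟩

lemma adj_xv {v : V} (hv : v ∈ T) (b : Bool) :
    (mwcGraph G T).Adj (Sum.inr (Sum.inr (v, b))) (Sum.inl v) := by
  rw [mwcGraph, SimpleGraph.fromRel_adj]
  rcases b with _ | _ <;> exact ⟨by simp, Or.inl ⟨hv, rfl⟩⟩

lemma adj_xx' {v : V} (hv : v ∈ T) :
    (mwcGraph G T).Adj (Sum.inr (Sum.inr (v, false))) (Sum.inr (Sum.inr (v, true))) := by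
  rw [mwcGraph, SimpleGraph.fromRel_adj]
  exact ⟨by simp, Or.inl ⟨hv, rfl⟩⟩

lemma adj_inl_elim {a : V} {b : V ⊕ Bool ⊕ V × Bool}
    (h : (mwcGraph G T).Adj (Sum.inl a) b) :
    (∃ c, b = Sum.inl c ∧ G.Adj a c) ∨
      (a ∈ T ∧ ∃ β, b = Sum.inr (Sum.inr (a, β))) := by
  rw [mwcGraph, SimpleGraph.fromRel_adj] at h
  obtain ⟨hne, h | h⟩ := h
  · rcases b with c | β | ⟨w, β⟩
    · exact Or.inl ⟨c, rfl, h⟩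
    · exact h.elim
    · rcases β with _ | _ <;> exact h.elim
  · rcases b with c | β | ⟨w, β⟩
    · exact Or.inl ⟨c, rfl, h.symm⟩
    · exact h.elim
    · rcases β with _ | _ <;>
        · obtain ⟨hw, rfl⟩ := h
          exact Or.inr ⟨hw, _, rfl⟩

lemma adj_st_elim {β : Bool} {b : V ⊕ Bool ⊕ V × Bool}
    (h : (mwcGraph G T).Adj (Sum.inr (Sum.inl β)) b) :
    ∃ v ∈ T, b = Sum.inr (Sum.inr (v, false)) := by
  rw [mwcGraph, SimpleGraph.fromRel_adj] at h
  obtain ⟨hne, h | h⟩ := h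
  · rcases b with c | γ | ⟨w, γ⟩
    · exact h.elim
    · exact h.elim
    · rcases γ with _ | _
      · exact ⟨w, h, rfl⟩
      · exact h.elim
  · rcases b with c | γ | ⟨w, γ⟩
    · exact h.elim
    · exact h.elim
    · rcases γ with _ | _ <;> exact h.elim

lemma adj_x'_elim {v : V} {b : V ⊕ Bool ⊕ V × Bool}
    (h : (mwcGraph G T).Adj (Sum.inr (Sum.inr (v, true))) b) :
    b = Sum.inr (Sum.inr (v, false)) ∨ b = Sum.inl v := by
  rw [mwcGraph, SimpleGraph.fromRel_adj] at h
  obtain ⟨hne, h | h⟩ := h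
  · rcases b with c | γ | ⟨w, γ⟩
    · obtain ⟨_, rfl⟩ := h
      exact Or.inr rfl
    · exact h.elim
    · rcases γ with _ | _ <;> exact h.elim
  · rcases b with c | γ | ⟨w, γ⟩
    · exact h.elim
    · exact h.elim
    · rcases γ with _ | _
      · obtain ⟨_, rfl⟩ := h
        exact Or.inl rfl
      · exact h.elim

lemma adj_x_elim {v : V} {b : V ⊕ Bool ⊕ V × Bool}
    (h : (mwcGraph G T).Adj (Sum.inr (Sum.inr (v, false))) b) :
    b = Sum.inl v ∨ b = Sum.inr (Sum.inr (v, true)) ∨ ∃ β, b = Sum.inr (Sum.inl β) := by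
  rw [mwcGraph, SimpleGraph.fromRel_adj] at h
  obtain ⟨hne, h | h⟩ := h
  · rcases b with c | γ | ⟨w, γ⟩
    · obtain ⟨_, rfl⟩ := h
      exact Or.inl rfl
    · exact h.elim
    · rcases γ with _ | _
      · exact h.elim
      · obtain ⟨_, rfl⟩ := h
        exact Or.inr (Or.inl rfl)
  · rcases b with c | γ | ⟨w, γ⟩
    · exact h.elim
    · exact Or.inr (Or.inr ⟨γ, rfl⟩)
    · rcases γ with _ | _ <;> exact h.elim

/-- The embedding of `G` into `mwcGraph G T` as a graph homomorphism. -/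
def homInl (G : SimpleGraph V) (T : Set V) : G →g mwcGraph G T :=
  ⟨Sum.inl, fun h => adj_GG h⟩

@[simp] lemma homInl_coe : ⇑(homInl G T) = Sum.inl := rfl

/-- Key extraction lemma: any path in `mwcGraph G T` from a `G`-vertex `a` to `t`
avoiding `s` yields a path in `G` from `a` to some terminal `w`, whose edges and
support map into the big path's, and which exits through `x_w`. -/
lemma extract :
    ∀ (n : ℕ) (a : V) (Q : (mwcGraph G T).Walk (Sum.inl a) (Sum.inr (Sum.inl true))),
      Q.length = n → Q.IsPath → Sum.inr (Sum.inl false) ∉ Q.support →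
      ∃ w ∈ T, ∃ q : G.Walk a w, q.IsPath ∧
        (∀ e ∈ q.edges, e.map Sum.inl ∈ Q.edges) ∧
        (∀ x ∈ q.support, Sum.inl x ∈ Q.support) ∧
        Sum.inr (Sum.inr (w, false)) ∈ Q.support := by
  intro n
  induction n using Nat.strong_induction_on with
  | _ n IH =>
    intro a Q hlen hp hs
    cases Q with
    | cons h Q' =>
      rename_i b
      rcases adj_inl_elim h with ⟨c, rfl, hac⟩ | ⟨haT, β, rfl⟩
      · -- first step stays in G
        have hp' : Q'.IsPath ∧ Sum.inl a ∉ Q'.support := by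
          rw [Walk.cons_isPath_iff] at hp; exact hp
        have hs' : Sum.inr (Sum.inl false) ∉ Q'.support := fun hmem =>
          hs (List.mem_cons_of_mem _ hmem)
        obtain ⟨w, hwT, q', hq'p, hq'e, hq'sup, hxw⟩ :=
          IH Q'.length (by simp at hlen; omega) c Q' rfl hp'.1 hs'
        refine ⟨w, hwT, Walk.cons hac q', ?_, ?_, ?_, ?_⟩
        · rw [Walk.cons_isPath_iff]
          exact ⟨hq'p, fun hmem => hp'.2 (hq'sup a hmem)⟩
        · intro e he
          rcases List.mem_cons.mp he with rfl | he'
          · simp [Walk.edges_cons]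
          · exact List.mem_cons_of_mem _ (hq'e e he')
        · intro x hx
          rcases List.mem_cons.mp hx with rfl | hx'
          · exact Walk.start_mem_support _
          · exact List.mem_cons_of_mem _ (hq'sup x hx')
        · exact List.mem_cons_of_mem _ hxw
      · -- first step leaves G through the gadget at `a`
        refine ⟨a, haT, Walk.nil, Walk.IsPath.nil, by simp, ?_, ?_⟩
        · intro x hx
          simp only [Walk.support_nil, List.mem_singleton] at hx
          subst hx
          exact Walk.start_mem_support _
        · rcases β with _ | _
          · exact List.mem_cons_of_mem _ (Walk.start_mem_support _)
          · -- stepped to x'_a; the next vertex must be x_a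
            cases Q' with
            | cons h' Q'' =>
              rcases adj_x'_elim h' with rfl | rfl
              · exact List.mem_cons_of_mem _
                  (List.mem_cons_of_mem _ (Walk.start_mem_support _))
              · exfalso
                rw [Walk.cons_isPath_iff] at hp
                exact hp.2 (List.mem_cons_of_mem _ (Walk.start_mem_support _))

end MwcAux

open MwcAux SimpleGraph Walk in
/-- **(Reduction from MultiwayCut to `{s,t}`-OddPathEdgeBlocker.)**
A set `F ⊆ E(G)` intersects every path of `G` between two distinct terminals
of `T` (i.e. is a multiway cut of `T` in `G`) iff `H − F` contains no
odd-length `s – t` path; equivalently, iff every odd-length `s – t` path of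
`H` uses an edge coming from `F`. -/
theorem multiway_cut_iff_no_odd_st_path {V : Type*} (G : SimpleGraph V)
    (T : Set V) (F : Set (Sym2 V)) (hF : F ⊆ G.edgeSet) :
    (∀ u ∈ T, ∀ v ∈ T, u ≠ v → ∀ p : G.Walk u v, p.IsPath →
      ∃ e ∈ F, e ∈ p.edges) ↔
    (∀ p : (mwcGraph G T).Walk (Sum.inr (Sum.inl false)) (Sum.inr (Sum.inl true)),
      p.IsPath → Odd p.length →
      ∃ e ∈ F, e.map (Sum.inl : V → V ⊕ Bool ⊕ V × Bool) ∈ p.edges) := by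
  constructor
  · -- multiway cut → every odd s-t path is hit
    intro hL P hP hodd
    cases P with
    | cons h₁ P₁ =>
      obtain ⟨u, huT, rfl⟩ := adj_st_elim h₁
      cases P₁ with
      | cons h₂ P₂ =>
        rename_i c
        have hsP₂ : Sum.inr (Sum.inl false) ∉ P₂.support := by
          have hP' := hP
          rw [Walk.cons_isPath_iff] at hP'
          exact fun hm => hP'.2 (List.mem_cons_of_mem _ hm)
        rcases adj_x_elim h₂ with rfl | rfl | ⟨β, rfl⟩
        · -- went straight into G at u
          rw [Walk.cons_isPath_iff, Walk.cons_isPath_iff] at hP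
          obtain ⟨⟨hP₂, hxu⟩, _⟩ := hP
          obtain ⟨w, hwT, q, hqp, hqe, _, hxw⟩ := extract P₂.length u P₂ rfl hP₂ hsP₂
          have hne : u ≠ w := by rintro rfl; exact hxu hxw
          obtain ⟨e, heF, heq⟩ := hL u huT w hwT hne q hqp
          exact ⟨e, heF,
            List.mem_cons_of_mem _ (List.mem_cons_of_mem _ (hqe e heq))⟩
        · -- went to x'_u
          cases P₂ with
          | cons h₃ P₃ =>
            have hsP₃ : Sum.inr (Sum.inl false) ∉ P₃.support := fun hm =>
              hsP₂ (List.mem_cons_of_mem _ hm)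
            rcases adj_x'_elim h₃ with rfl | rfl
            · -- back to x_u : impossible
              exfalso
              rw [Walk.cons_isPath_iff, Walk.cons_isPath_iff] at hP
              exact hP.1.2 (List.mem_cons_of_mem _ (Walk.start_mem_support _))
            · -- down to u
              rw [Walk.cons_isPath_iff, Walk.cons_isPath_iff,
                Walk.cons_isPath_iff] at hP
              obtain ⟨⟨⟨hP₃, _⟩, hxu⟩, _⟩ := hP
              obtain ⟨w, hwT, q, hqp, hqe, _, hxw⟩ :=
                extract P₃.length u P₃ rfl hP₃ hsP₃
              have hne : u ≠ w := by
                rintro rfl; exact hxu (List.mem_cons_of_mem _ hxw)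
              obtain ⟨e, heF, heq⟩ := hL u huT w hwT hne q hqp
              exact ⟨e, heF, List.mem_cons_of_mem _ (List.mem_cons_of_mem _
                (List.mem_cons_of_mem _ (hqe e heq)))⟩
        · rcases β with _ | _
          · -- back to s : impossible
            exfalso
            rw [Walk.cons_isPath_iff] at hP
            exact hP.2 (List.mem_cons_of_mem _ (Walk.start_mem_support _))
          · -- directly to t : length 2, not odd
            exfalso
            rw [Walk.cons_isPath_iff, Walk.cons_isPath_iff] at hP
            have h2 : P₂ = Walk.nil := Walk.isPath_iff_eq_nil.mp hP.1.1
            subst h2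
            simp only [Walk.length_cons, Walk.length_nil] at hodd
            rcases hodd with ⟨k, hk⟩
            omega
  · -- every odd s-t path hit → multiway cut
    intro hR u huT v hvT hne p hp
    classical
    set q : (mwcGraph G T).Walk (Sum.inl u) (Sum.inl v) := p.map (homInl G T) with hqdef
    set suffix : (mwcGraph G T).Walk (Sum.inl v) (Sum.inr (Sum.inl true)) :=
      Walk.cons (adj_xv hvT false).symm (Walk.cons (adj_sx hvT true).symm Walk.nil)
      with hsufdef
    set core : (mwcGraph G T).Walk (Sum.inl u) (Sum.inr (Sum.inl true)) :=
      q.append suffix with hcoredef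
    have hcoreSup : core.support =
        p.support.map Sum.inl ++
          [Sum.inr (Sum.inr (v, false)), Sum.inr (Sum.inl true)] := by
      have hqs : q.support = p.support.map Sum.inl := Walk.support_map (homInl G T) p
      rw [hcoredef, Walk.support_append, hqs, hsufdef]
      simp [hcoredef, hqdef, hsufdef, Walk.support_append, Walk.support_map]
    have hcoreEdges : core.edges =
        p.edges.map (Sym2.map Sum.inl) ++
          [s(Sum.inl v, Sum.inr (Sum.inr (v, false))),
           s(Sum.inr (Sum.inr (v, false)), Sum.inr (Sum.inl true))] := by
      have hqe : q.edges = p.edges.map (Sym2.map Sum.inl) := Walk.edges_map (homInl G T) p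
      rw [hcoredef, Walk.edges_append, hqe, hsufdef]
      simp [hcoredef, hqdef, hsufdef, Walk.edges_append, Walk.edges_map]
    have hcoreLen : core.length = p.length + 2 := by
      have hql : q.length = p.length := Walk.length_map (homInl G T) p
      rw [hcoredef, Walk.length_append, hql, hsufdef]
      simp [hcoredef, hqdef, hsufdef, Walk.length_append, Walk.length_map]
    have hsupNodup := hp.support_nodup
    have hinj : Function.Injective (Sum.inl : V → V ⊕ Bool ⊕ V × Bool) :=
      Sum.inl_injective
    have pullback : ∀ (P : (mwcGraph G T).Walk (Sum.inr (Sum.inl false))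
          (Sum.inr (Sum.inl true))) (e : Sym2 V), e ∈ F →
        e.map Sum.inl ∈ P.edges →
        (∀ e', e' ∈ P.edges → e' ∈ core.edges ∨ (∃ x, Sum.inr x ∈ e')) →
        e ∈ p.edges := by
      intro P e heF hmem hsub
      induction e using Sym2.ind with
      | _ a b =>
        rcases hsub _ hmem with hc | ⟨x, hx⟩
        · rw [hcoreEdges] at hc
          rcases List.mem_append.mp hc with hc | hc
          · obtain ⟨e', he'p, he'eq⟩ := List.mem_map.mp hc
            have : e' = s(a, b) := Sym2.map.injective hinj (by simpa using he'eq)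
            exact this ▸ he'p
          · exfalso
            simp only [List.mem_cons, List.mem_singleton] at hc
            rcases hc with hc | hc <;>
              · rw [Sym2.map_pair_eq, Sym2.eq_iff] at hc
                rcases hc with ⟨h1, h2⟩ | ⟨h1, h2⟩ <;> simp_all
        · exfalso
          rw [Sym2.map_pair_eq] at hx
          rcases Sym2.mem_iff.mp hx with hx | hx <;> simp_all
    rcases Nat.even_or_odd p.length with hev | hod
    · -- even inner length : use the x'_u detour
      set P : (mwcGraph G T).Walk (Sum.inr (Sum.inl false)) (Sum.inr (Sum.inl true)) :=
        Walk.cons (adj_sx huT false) (Walk.cons (adj_xx' huT)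
          (Walk.cons (adj_xv huT true) core)) with hPdef
      have hPlen : P.length = p.length + 5 := by
        simp [hPdef, hcoreLen]
      have hPodd : Odd P.length := by
        rw [hPlen]
        rcases hev with ⟨k, hk⟩
        exact ⟨k + 2, by omega⟩
      have hPpath : P.IsPath := by
        rw [Walk.isPath_def]
        simp only [hPdef, Walk.support_cons, hcoreSup]
        simp only [List.nodup_cons, List.mem_cons, List.mem_append,
          List.mem_map, List.mem_singleton, List.nodup_append,
          List.nodup_singleton, List.disjoint_cons_right]
        refine ⟨?_, ?_, ?_, ?_⟩
        · push_neg
          refine ⟨by simp, by simp, fun x hx => by simp, by simp, by simp⟩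
        · push_neg
          refine ⟨by simp, fun x hx => by simp, by simp [hne], by simp⟩
        · push_neg
          refine ⟨fun x hx => by simp, by simp [hne], by simp⟩
        · refine ⟨hsupNodup.map hinj, by simp, ?_⟩
          rintro a ⟨y, _, rfl⟩ b hb
          rcases hb with rfl | rfl | hb <;> simp_all
      obtain ⟨e, heF, hemem⟩ := hR P hPpath hPodd
      refine ⟨e, heF, pullback P e heF hemem ?_⟩
      intro e' he'
      simp only [hPdef, Walk.edges_cons, List.mem_cons] at he'
      rcases he' with rfl | rfl | rfl | he'
      · exact Or.inr ⟨Sum.inl false, by simp⟩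
      · exact Or.inr ⟨Sum.inr (u, false), by simp⟩
      · exact Or.inr ⟨Sum.inr (u, true), by simp⟩
      · exact Or.inl he'
    · -- odd inner length : go straight through x_u
      set P : (mwcGraph G T).Walk (Sum.inr (Sum.inl false)) (Sum.inr (Sum.inl true)) :=
        Walk.cons (adj_sx huT false) (Walk.cons (adj_xv huT false) core) with hPdef
      have hPlen : P.length = p.length + 4 := by
        simp [hPdef, hcoreLen]
      have hPodd : Odd P.length := by
        rw [hPlen]
        rcases hod with ⟨k, hk⟩
        exact ⟨k + 2, by omega⟩
      have hPpath : P.IsPath := by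
        rw [Walk.isPath_def]
        simp only [hPdef, Walk.support_cons, hcoreSup]
        simp only [List.nodup_cons, List.mem_cons, List.mem_append,
          List.mem_map, List.mem_singleton, List.nodup_append,
          List.nodup_singleton, List.disjoint_cons_right]
        refine ⟨?_, ?_, ?_⟩
        · push_neg
          refine ⟨by simp, fun x hx => by simp, by simp, by simp⟩
        · push_neg
          refine ⟨fun x hx => by simp, by simp [hne], by simp⟩
        · refine ⟨hsupNodup.map hinj, by simp, ?_⟩
          rintro a ⟨y, _, rfl⟩ b hb
          rcases hb with rfl | rfl | hb <;> simp_all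
      obtain ⟨e, heF, hemem⟩ := hR P hPpath hPodd
      refine ⟨e, heF, pullback P e heF hemem ?_⟩
      intro e' he'
      simp only [hPdef, Walk.edges_cons, List.mem_cons] at he'
      rcases he' with rfl | rfl | he'
      · exact Or.inr ⟨Sum.inl false, by simp⟩
      · exact Or.inr ⟨Sum.inr (u, false), by simp⟩
      · exact Or.inl he'
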